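/- For each (I,J) ∈ O, the set A_{I,J} is star-shaped with respect to the point b: for every y ∈ A_{I,J} and every t ∈ [0,1], the point (1−t)y + tb lies in A_{I,J}. -/

import Mathlib

open Finset

/-- The maximum of `|z i - z j|` over `j ∈ S`, with the convention `max ∅ = 0`. -/
noncomputable def maxDist {n : ℕ} (z : Fin n → ℝ) (i : Fin n) (S : Finset (Fin n)) : ℝ :=
  if h : S.Nonempty then S.sup' h (fun j => |z i - z j|) else 0

/-- `ν^z_{I,i}`: the minimum over all subsets `S ⊆ I \ {i}` with `|S| = ⌊n/3⌋` of
`max_{j ∈ S} |z i - z j|`, with the convention `min ∅ = 0`. -/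
noncomputable def nu (n : ℕ) (z : Fin n → ℝ) (I : Finset (Fin n)) (i : Fin n) : ℝ :=
  if h : ((I.erase i).powersetCard (n / 3)).Nonempty then
    ((I.erase i).powersetCard (n / 3)).inf' h (maxDist z i)
  else 0

/-- `ν^z_I = max_{i ∈ I} ν^z_{I,i}`, with the convention `max ∅ = 0`. -/
noncomputable def nuMax (n : ℕ) (z : Fin n → ℝ) (I : Finset (Fin n)) : ℝ :=
  if h : I.Nonempty then I.sup' h (nu n z I) else 0

/-- `δ^z = (max{t₁,…,tₙ} - min{t₁,…,tₙ}) / n`. -/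
noncomputable def delta (n : ℕ) (z : Fin n → ℝ) : ℝ :=
  if h : (Finset.univ : Finset (Fin n)).Nonempty then
    (Finset.univ.sup' h z - Finset.univ.inf' h z) / n
  else 0

/-- `ẏ = (t₁, …, t_{n-1}, 0) ∈ ℝⁿ` for `y = (t₁, …, t_{n-1}) ∈ ℝ^{n-1}`. -/
def ydot (n : ℕ) (y : Fin (n - 1) → ℝ) : Fin n → ℝ :=
  fun i => if h : (i : ℕ) < n - 1 then y ⟨i, h⟩ else 0

/-- The open cube `(-1, 1)^m`, the interior of `D^m = [-1,1]^m`. -/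
def IntD (m : ℕ) : Set (Fin m → ℝ) := {y | ∀ i, y i ∈ Set.Ioo (-1 : ℝ) 1}

/-- `(I, J) ∈ O`: `I` and `J` are disjoint nonempty subsets of `[n]` with `I ∪ J = [n]`,
`|I| > n/3`, and `|J| > n/3`. -/
def memO (n : ℕ) (I J : Finset (Fin n)) : Prop :=
  I.Nonempty ∧ J.Nonempty ∧ Disjoint I J ∧ I ∪ J = Finset.univ ∧
    (n : ℝ) < 3 * I.card ∧ (n : ℝ) < 3 * J.card

/-- The set `A_{I,J}`. -/
def setAIJ (n : ℕ) (I J : Finset (Fin n)) : Set (Fin (n - 1) → ℝ) :=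
  {y | y ∈ IntD (n - 1) ∧ ∀ i ∈ I, ∀ j ∈ J,
    delta n (ydot n y) < ydot n y j - ydot n y i ∧
    nu n (ydot n y) I i < delta n (ydot n y) ∧
    nu n (ydot n y) J j < delta n (ydot n y)}

/-- The set `A = { y ∈ Int(D^{n-1}) : ν^{ẏ}_{[n]} < δ^{ẏ} }`. -/
def setA (n : ℕ) : Set (Fin (n - 1) → ℝ) :=
  {y | y ∈ IntD (n - 1) ∧ nuMax n (ydot n y) Finset.univ < delta n (ydot n y)}

/-- The point `b ∈ ℝ^{n-1}` associated to `(I, J) ∈ O`: if `n ∈ J` then `b_i = -1/2` for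
`i ∈ I` and `b_j = 0` for `j ∈ J \ {n}`; if `n ∈ I` then `b_i = 0` for `i ∈ I \ {n}` and
`b_j = 1/2` for `j ∈ J`. -/
noncomputable def bpt (n : ℕ) (I J : Finset (Fin n)) : Fin (n - 1) → ℝ :=
  fun i =>
    if (⟨n - 1, by have := i.isLt; omega⟩ : Fin n) ∈ J then
      (if Fin.castLE (Nat.sub_le n 1) i ∈ I then -(1 / 2 : ℝ) else 0)
    else
      (if Fin.castLE (Nat.sub_le n 1) i ∈ I then 0 else (1 / 2 : ℝ))


lemma convex_pos {x y t : ℝ} (hx : 0 < x) (hy : 0 < y) (ht0 : 0 ≤ t) (ht1 : t ≤ 1) :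
    0 < (1 - t) * x + t * y := by
  rcases eq_or_lt_of_le ht1 with rfl | h
  · simpa using hy
  · nlinarith

lemma sup'_affine {α : Type*} (s : Finset α) (hs : s.Nonempty) (f : α → ℝ) (a c : ℝ)
    (ha : 0 ≤ a) : s.sup' hs (fun k => a * f k + c) = a * s.sup' hs f + c := by
  refine (Finset.comp_sup'_eq_sup'_comp hs (fun x => a * x + c) (fun x y => ?_)).symm
  rcases le_total x y with h | h
  · rw [max_eq_right h, max_eq_right (by nlinarith)]
  · rw [max_eq_left h, max_eq_left (by nlinarith)]

lemma inf'_affine {α : Type*} (s : Finset α) (hs : s.Nonempty) (f : α → ℝ) (a c : ℝ)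
    (ha : 0 ≤ a) : s.inf' hs (fun k => a * f k + c) = a * s.inf' hs f + c := by
  refine (Finset.apply_inf'_eq_inf'_comp hs (fun x => a * x + c) (fun x y => ?_)).symm
  rcases le_total x y with h | h
  · rw [min_eq_left h, min_eq_left (by nlinarith)]
  · rw [min_eq_right h, min_eq_right (by nlinarith)]

lemma maxDist_nonneg {n : ℕ} (z : Fin n → ℝ) (i : Fin n) (S : Finset (Fin n)) :
    0 ≤ maxDist z i S := by
  unfold maxDist
  split_ifs with h
  · obtain ⟨j, hj⟩ := h
    exact le_trans (abs_nonneg _) (Finset.le_sup' (fun j => |z i - z j|) hj)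
  · exact le_refl _

lemma nu_nonneg (n : ℕ) (z : Fin n → ℝ) (I : Finset (Fin n)) (i : Fin n) :
    0 ≤ nu n z I i := by
  unfold nu
  split_ifs with h
  · exact Finset.le_inf' h _ (fun S _ => maxDist_nonneg z i S)
  · exact le_refl _

lemma maxDist_affine {n : ℕ} (w z : Fin n → ℝ) (a c : ℝ) (ha : 0 ≤ a) (i : Fin n)
    (S : Finset (Fin n)) (hwi : w i = a * z i + c) (hS : ∀ k ∈ S, w k = a * z k + c) :
    maxDist w i S = a * maxDist z i S := by
  unfold maxDist
  by_cases h : S.Nonempty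
  · rw [dif_pos h, dif_pos h]
    have h1 : ∀ j ∈ S, |w i - w j| = a * |z i - z j| := by
      intro j hj
      rw [hwi, hS j hj, show a * z i + c - (a * z j + c) = a * (z i - z j) by ring,
        abs_mul, abs_of_nonneg ha]
    rw [Finset.sup'_congr h rfl h1]
    simpa using sup'_affine S h (fun j => |z i - z j|) a 0 ha
  · rw [dif_neg h, dif_neg h]; ring

lemma nu_affine (n : ℕ) (w z : Fin n → ℝ) (a c : ℝ) (ha : 0 ≤ a) (I : Finset (Fin n))
    (i : Fin n) (hw : ∀ k ∈ insert i I, w k = a * z k + c) :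
    nu n w I i = a * nu n z I i := by
  unfold nu
  by_cases h : ((I.erase i).powersetCard (n / 3)).Nonempty
  · rw [dif_pos h, dif_pos h]
    have h1 : ∀ S ∈ (I.erase i).powersetCard (n / 3), maxDist w i S = a * maxDist z i S := by
      intro S hS
      refine maxDist_affine w z a c ha i S (hw i (Finset.mem_insert_self i I)) ?_
      intro k hk
      exact hw k (Finset.mem_insert_of_mem
        (Finset.mem_of_mem_erase ((Finset.mem_powersetCard.mp hS).1 hk)))
    rw [Finset.inf'_congr h rfl h1]
    simpa using inf'_affine _ h (maxDist z i) a 0 ha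
  · rw [dif_neg h, dif_neg h]; ring

lemma delta_nonneg (n : ℕ) (f : Fin n → ℝ) : 0 ≤ delta n f := by
  unfold delta
  split_ifs with h
  · obtain ⟨k, hk⟩ := h
    refine div_nonneg (sub_nonneg.2 (le_trans (Finset.inf'_le f hk) (Finset.le_sup' f hk)))
      (Nat.cast_nonneg n)
  · exact le_refl _

lemma delta_split (n : ℕ) (I J : Finset (Fin n)) (hI : I.Nonempty) (hJ : J.Nonempty)
    (hU : I ∪ J = Finset.univ) (f : Fin n → ℝ) (hf : ∀ i ∈ I, ∀ j ∈ J, f i ≤ f j) :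
    delta n f = (J.sup' hJ f - I.inf' hI f) / n := by
  have hu : (Finset.univ : Finset (Fin n)).Nonempty := ⟨hI.choose, Finset.mem_univ _⟩
  unfold delta
  rw [dif_pos hu]
  have hsup : Finset.univ.sup' hu f = J.sup' hJ f := by
    refine le_antisymm (Finset.sup'_le hu f fun k _ => ?_)
      (Finset.sup'_mono f (Finset.subset_univ J) hJ)
    have hk : k ∈ I ∪ J := hU ▸ Finset.mem_univ k
    rcases Finset.mem_union.1 hk with hk | hk
    · obtain ⟨j0, hj0⟩ := hJ
      exact le_trans (hf k hk j0 hj0) (Finset.le_sup' f hj0)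
    · exact Finset.le_sup' f hk
  have hinf : Finset.univ.inf' hu f = I.inf' hI f := by
    refine le_antisymm (Finset.inf'_mono f (Finset.subset_univ I) hI)
      (Finset.le_inf' hu f fun k _ => ?_)
    have hk : k ∈ I ∪ J := hU ▸ Finset.mem_univ k
    rcases Finset.mem_union.1 hk with hk | hk
    · exact Finset.inf'_le f hk
    · obtain ⟨i0, hi0⟩ := hI
      exact le_trans (Finset.inf'_le f hi0) (hf i0 hi0 k hk)
  rw [hsup, hinf]

/-- For each `(I,J) ∈ O`, the set `A_{I,J}` is star-shaped with respect to the point `b`. -/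
theorem stmt_4 (n : ℕ) (hn : 2 ≤ n) (I J : Finset (Fin n)) (hIJ : memO n I J) :
    ∀ y ∈ setAIJ n I J, ∀ t ∈ Set.Icc (0 : ℝ) 1,
      (1 - t) • y + t • bpt n I J ∈ setAIJ n I J := by
  obtain ⟨hI, hJ, hdisj, hU, hI3, hJ3⟩ := hIJ
  intro y hy t ht
  obtain ⟨hyD, hyC⟩ := hy
  obtain ⟨ht0, ht1⟩ := ht
  have ht1' : (0:ℝ) ≤ 1 - t := by linarith
  have hn2 : (2:ℝ) ≤ n := by exact_mod_cast hn
  have hbbd : ∀ k, -(1/2 : ℝ) ≤ bpt n I J k ∧ bpt n I J k ≤ 1/2 := by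
    intro k
    unfold bpt
    split_ifs <;> norm_num
  refine ⟨fun k => ?_, fun i hi j hj => ?_⟩
  · obtain ⟨hk1, hk2⟩ := hyD k
    obtain ⟨hb1, hb2⟩ := hbbd k
    simp only [Pi.add_apply, Pi.smul_apply, smul_eq_mul]
    constructor
    · have key := convex_pos (x := y k + 1) (y := bpt n I J k + 1)
        (by linarith) (by linarith) ht0 ht1
      linarith
    · have key := convex_pos (x := 1 - y k) (y := 1 - bpt n I J k)
        (by linarith) (by linarith) ht0 ht1
      linarith
  · set z := ydot n y with hz
    set zb := ydot n (bpt n I J) with hzbdef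
    set w := ydot n ((1 - t) • y + t • bpt n I J) with hwdef
    -- the constants of zb on I and J
    obtain ⟨cI, cJ, hc, hzbI, hzbJ⟩ :
        ∃ cI cJ : ℝ, cJ = cI + 1/2 ∧ (∀ k ∈ I, zb k = cI) ∧ (∀ k ∈ J, zb k = cJ) := by
      by_cases he : (⟨n - 1, by omega⟩ : Fin n) ∈ J
      · refine ⟨-(1/2), 0, by norm_num, ?_, ?_⟩
        · intro k hk
          rw [hzbdef]
          unfold ydot bpt
          by_cases hlt : (k : ℕ) < n - 1
          · rw [dif_pos hlt, if_pos he, if_pos (show Fin.castLE (Nat.sub_le n 1)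
              (⟨(k : ℕ), hlt⟩ : Fin (n-1)) ∈ I from by
                have hcast : Fin.castLE (Nat.sub_le n 1) (⟨(k : ℕ), hlt⟩ : Fin (n-1)) = k :=
                  Fin.ext rfl
                rw [hcast]
                exact hk)]
          · have hk2 := k.isLt
            have hkval : k = (⟨n - 1, by omega⟩ : Fin n) := Fin.ext (by simp; omega)
            exact absurd (hkval ▸ hk) (Finset.disjoint_left.mp (hdisj.symm) he)
        · intro k hk
          rw [hzbdef]
          unfold ydot bpt
          by_cases hlt : (k : ℕ) < n - 1
          · rw [dif_pos hlt, if_pos he, if_neg (show ¬ Fin.castLE (Nat.sub_le n 1)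
              (⟨(k : ℕ), hlt⟩ : Fin (n-1)) ∈ I from by
                have : Fin.castLE (Nat.sub_le n 1) (⟨(k : ℕ), hlt⟩ : Fin (n-1)) = k :=
                  Fin.ext rfl
                rw [this]
                exact Finset.disjoint_right.mp hdisj hk)]
          · rw [dif_neg hlt]
      · have he' : (⟨n - 1, by omega⟩ : Fin n) ∈ I := by
          have : (⟨n - 1, by omega⟩ : Fin n) ∈ I ∪ J := hU ▸ Finset.mem_univ _
          rcases Finset.mem_union.1 this with h | h
          · exact h
          · exact absurd h he
        refine ⟨0, 1/2, by norm_num, ?_, ?_⟩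
        · intro k hk
          rw [hzbdef]
          unfold ydot bpt
          by_cases hlt : (k : ℕ) < n - 1
          · rw [dif_pos hlt, if_neg he, if_pos (show Fin.castLE (Nat.sub_le n 1)
              (⟨(k : ℕ), hlt⟩ : Fin (n-1)) ∈ I from by
                have hcast : Fin.castLE (Nat.sub_le n 1) (⟨(k : ℕ), hlt⟩ : Fin (n-1)) = k :=
                  Fin.ext rfl
                rw [hcast]
                exact hk)]
          · rw [dif_neg hlt]
        · intro k hk
          rw [hzbdef]
          unfold ydot bpt
          by_cases hlt : (k : ℕ) < n - 1
          · rw [dif_pos hlt, if_neg he, if_neg (show ¬ Fin.castLE (Nat.sub_le n 1)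
              (⟨(k : ℕ), hlt⟩ : Fin (n-1)) ∈ I from by
                have : Fin.castLE (Nat.sub_le n 1) (⟨(k : ℕ), hlt⟩ : Fin (n-1)) = k :=
                  Fin.ext rfl
                rw [this]
                exact Finset.disjoint_right.mp hdisj hk)]
          · have hk2 := k.isLt
            have hkval : k = (⟨n - 1, by omega⟩ : Fin n) := Fin.ext (by simp; omega)
            exact absurd (hkval ▸ hk) (Finset.disjoint_left.mp hdisj he')
    have hwk : ∀ k, w k = (1 - t) * z k + t * zb k := by
      intro k
      rw [hwdef, hz, hzbdef]
      unfold ydot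
      by_cases hlt : (k : ℕ) < n - 1
      · simp [dif_pos hlt]
      · simp [dif_neg hlt]
    have hwI : ∀ k ∈ I, w k = (1 - t) * z k + t * cI := by
      intro k hk; rw [hwk k, hzbI k hk]
    have hwJ : ∀ k ∈ J, w k = (1 - t) * z k + t * cJ := by
      intro k hk; rw [hwk k, hzbJ k hk]
    have hdz0 : 0 ≤ delta n z := delta_nonneg n z
    have hlez : ∀ i ∈ I, ∀ j ∈ J, z i ≤ z j := by
      intro i hi j hj
      have := (hyC i hi j hj).1
      linarith
    have hlew : ∀ i ∈ I, ∀ j ∈ J, w i ≤ w j := by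
      intro i hi j hj
      rw [hwI i hi, hwJ j hj]
      have h1 := mul_nonneg ht1' (sub_nonneg.2 (hlez i hi j hj))
      have h2 : 0 ≤ t * (cJ - cI) := mul_nonneg ht0 (by rw [hc]; norm_num)
      nlinarith
    have hdzs : delta n z = (J.sup' hJ z - I.inf' hI z) / n :=
      delta_split n I J hI hJ hU z hlez
    have hdws : delta n w = (J.sup' hJ w - I.inf' hI w) / n :=
      delta_split n I J hI hJ hU w hlew
    have hsupw : J.sup' hJ w = (1 - t) * J.sup' hJ z + t * cJ := by
      rw [Finset.sup'_congr hJ rfl (fun k hk => hwJ k hk)]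
      exact sup'_affine J hJ z (1 - t) (t * cJ) ht1'
    have hinfw : I.inf' hI w = (1 - t) * I.inf' hI z + t * cI := by
      rw [Finset.inf'_congr hI rfl (fun k hk => hwI k hk)]
      exact inf'_affine I hI z (1 - t) (t * cI) ht1'
    have hn0 : (0:ℝ) < n := by linarith
    have hdw : delta n w = (1 - t) * delta n z + t * (1 / (2 * n)) := by
      rw [hdws, hsupw, hinfw, hdzs, hc]
      field_simp
      ring
    have hnuI : nu n w I i = (1 - t) * nu n z I i := by
      refine nu_affine n w z (1 - t) (t * cI) ht1' I i ?_
      intro k hk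
      rcases Finset.mem_insert.1 hk with rfl | hk
      · exact hwI k hi
      · exact hwI k hk
    have hnuJ : nu n w J j = (1 - t) * nu n z J j := by
      refine nu_affine n w z (1 - t) (t * cJ) ht1' J j ?_
      intro k hk
      rcases Finset.mem_insert.1 hk with rfl | hk
      · exact hwJ k hj
      · exact hwJ k hk
    obtain ⟨g1, g2, g3⟩ := hyC i hi j hj
    have hy2 : (0:ℝ) < 1 / (2 * n) := by positivity
    have hy3 : (0:ℝ) < 1/2 - 1 / (2 * n) := by
      rw [sub_pos, div_lt_div_iff₀ (by positivity) (by norm_num)]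
      linarith
    refine ⟨?_, ?_, ?_⟩
    · have hwji : w j - w i = (1 - t) * (z j - z i) + t * (1/2) := by
        rw [hwI i hi, hwJ j hj, hc]; ring
      have key := convex_pos (x := z j - z i - delta n z) (y := 1/2 - 1 / (2 * n))
        (by linarith) hy3 ht0 ht1
      rw [hdw]
      linarith [key, hwji]
    · have key := convex_pos (x := delta n z - nu n z I i) (y := 1 / (2 * n))
        (by linarith) hy2 ht0 ht1
      rw [hdw, hnuI]
      linarith [key]
    · have key := convex_pos (x := delta n z - nu n z J j) (y := 1 / (2 * n))
        (by linarith) hy2 ht0 ht1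
      rw [hdw, hnuJ]
      linarith [key]
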